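/- Let α, β be 0-1 vectors of length p with α^R ⪰ β, and define τ_{kl} = Σ_{i=1}^{p−k} α^R_i − Σ_{j=1}^l β_j + ½(p−k−l−1)(p−k−l). Then τ_{kl} ≥ 0 for all 0 ≤ k,l ≤ p. -/
import Mathlib


open Finset

/-- Let α, β be 0-1 vectors of length p with α^R ⪰ β, and
τ_{kl} = Σ_{i=1}^{p−k} α^R_i − Σ_{j=1}^l β_j + ½(p−k−l−1)(p−k−l).
Then τ_{kl} ≥ 0 for all 0 ≤ k,l ≤ p. -/
theorem stmt_16 (p : ℕ) (α β : ℕ → ℕ)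
    (hα : ∀ i ∈ Finset.Icc 1 p, α i ≤ 1)
    (hβ : ∀ i ∈ Finset.Icc 1 p, β i ≤ 1)
    (hmaj : ∀ k ∈ Finset.Icc 1 p,
      ∑ i ∈ Finset.Icc 1 k, β i ≤ ∑ i ∈ Finset.Icc 1 k, α (p - i + 1)) :
    ∀ k ≤ p, ∀ l ≤ p,
      0 ≤ ∑ i ∈ Finset.Icc 1 (p - k), (α (p - i + 1) : ℚ)
        - ∑ j ∈ Finset.Icc 1 l, (β j : ℚ)
        + (1 / 2) * ((p : ℚ) - k - l - 1) * ((p : ℚ) - k - l) := by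
  intro k hk l hl
  set m := p - k with hm
  have hmp : m ≤ p := Nat.sub_le p k
  have hpk : (p : ℚ) - k = (m : ℚ) := by
    rw [hm, Nat.cast_sub hk]
  rw [hpk]
  -- β-sum up to min m l is ≤ α-sum up to m
  have hmaj' : ∀ n, n ≤ m → (∑ j ∈ Finset.Icc 1 n, β j : ℕ) ≤
      ∑ i ∈ Finset.Icc 1 m, α (p - i + 1) := by
    intro n hn
    rcases Nat.eq_zero_or_pos n with h0 | h1
    · simp [h0]
    · calc (∑ j ∈ Finset.Icc 1 n, β j : ℕ)
          ≤ ∑ i ∈ Finset.Icc 1 n, α (p - i + 1) :=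
            hmaj n (Finset.mem_Icc.mpr ⟨h1, le_trans hn hmp⟩)
        _ ≤ ∑ i ∈ Finset.Icc 1 m, α (p - i + 1) :=
            Finset.sum_le_sum_of_subset (Finset.Icc_subset_Icc_right hn)
  rcases le_or_gt l m with hlm | hml
  · -- case l ≤ m
    have h1 : (∑ j ∈ Finset.Icc 1 l, β j : ℕ) ≤ ∑ i ∈ Finset.Icc 1 m, α (p - i + 1) :=
      hmaj' l hlm
    have h1' : (∑ j ∈ Finset.Icc 1 l, (β j : ℚ)) ≤ ∑ i ∈ Finset.Icc 1 m, (α (p - i + 1) : ℚ) := by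
      exact_mod_cast h1
    have h2 : (0 : ℚ) ≤ ((m : ℚ) - l - 1) * ((m : ℚ) - l) := by
      rcases eq_or_lt_of_le hlm with heq | hlt
      · rw [heq]; ring_nf; simp
      · have : (1 : ℚ) ≤ (m : ℚ) - l := by
          have : (l : ℚ) + 1 ≤ (m : ℚ) := by exact_mod_cast hlt
          linarith
        nlinarith
    linarith
  · -- case m < l
    set t := l - m with ht
    have ht1 : 1 ≤ t := Nat.le_sub_of_add_le (by omega)
    have hml' : (m : ℚ) - l = -(t : ℚ) := by
      rw [ht, Nat.cast_sub hml.le]; ring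
    have hsplit : (∑ j ∈ Finset.Icc 1 l, β j : ℕ) =
        (∑ j ∈ Finset.Icc 1 m, β j) + ∑ j ∈ Finset.Icc (m + 1) l, β j := by
      rw [← Finset.sum_union]
      · congr 1
        ext x; simp only [Finset.mem_Icc, Finset.mem_union]; omega
      · rw [Finset.disjoint_left]
        intro a ha hb
        simp only [Finset.mem_Icc] at ha hb
        omega
    have htail : (∑ j ∈ Finset.Icc (m + 1) l, β j : ℕ) ≤ t := by
      calc (∑ j ∈ Finset.Icc (m + 1) l, β j : ℕ)
          ≤ ∑ j ∈ Finset.Icc (m + 1) l, 1 := by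
            apply Finset.sum_le_sum
            intro j hj
            simp only [Finset.mem_Icc] at hj
            exact hβ j (Finset.mem_Icc.mpr ⟨by omega, le_trans hj.2 hl⟩)
        _ = t := by rw [Finset.sum_const, smul_eq_mul, mul_one, Nat.card_Icc]; omega
    have hB : (∑ j ∈ Finset.Icc 1 l, β j : ℕ) ≤
        (∑ i ∈ Finset.Icc 1 m, α (p - i + 1)) + t := by
      rw [hsplit]
      exact Nat.add_le_add (hmaj' m le_rfl) htail
    have hB' : (∑ j ∈ Finset.Icc 1 l, (β j : ℚ)) ≤
        (∑ i ∈ Finset.Icc 1 m, (α (p - i + 1) : ℚ)) + t := by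
      exact_mod_cast hB
    have ht1' : (1 : ℚ) ≤ (t : ℚ) := by exact_mod_cast ht1
    have key : (m : ℚ) - l - 1 = -(t : ℚ) - 1 := by rw [hml']
    rw [key, hml']
    nlinarith [mul_nonneg (sub_nonneg.mpr ht1') (by positivity : (0:ℚ) ≤ (t:ℚ))]
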